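/- Let K be an algebraically closed field, let X = {x_1,…,x_n} be variables, and let U' ⊆ U ⊆ X be subsets of the variables. Let H and T be ideals of K[X], let R' be an ideal of K[U] and R'' an ideal of K[U'], and set H' = (H + T) ∩ K[U]. Assume: (1) V(H + R'^e) \ V(R''^e) ⊆ V(T); (2) V(H + T) ⊆ V(R'^e); and (3) V(H + R'^e) \ V(R''^e) ≠ ∅. Then V(H + R'^e) \ V(R''^e) = V(H + H'^e) \ V(R''^e). -/

import Mathlib

open MvPolynomial

/-- The affine zero set in `K^n` of an ideal of polynomials. -/
def zeroSet {K : Type*} [CommSemiring K] {σ : Type*} (I : Ideal (MvPolynomial σ K)) :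
    Set (σ → K) :=
  {p | ∀ f ∈ I, MvPolynomial.eval p f = 0}

lemma zeroSet_add_eq {K : Type*} [CommSemiring K] {σ : Type*}
    (I J : Ideal (MvPolynomial σ K)) :
    zeroSet (I + J) = zeroSet I ∩ zeroSet J := by
  ext p
  constructor
  · intro hp
    exact ⟨fun f hf => hp f (Submodule.mem_sup_left hf),
      fun f hf => hp f (Submodule.mem_sup_right hf)⟩
  · rintro ⟨h1, h2⟩ f hf
    rw [Submodule.add_eq_sup, Submodule.mem_sup] at hf
    obtain ⟨a, ha, b, hb, rfl⟩ := hf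
    simp [h1 a ha, h2 b hb]

lemma zeroSet_anti {K : Type*} [CommSemiring K] {σ : Type*}
    {I J : Ideal (MvPolynomial σ K)} (h : I ≤ J) : zeroSet J ⊆ zeroSet I :=
  fun _ hx f hf => hx f (h hf)

/-- Proposition: if R' ⊆ K[U], R'' ⊆ K[U'] satisfy the discovery conditions (1)–(3) for
hypotheses H and theses T, and H' = (H + T) ∩ K[U], then
V(H + R'^e) \ V(R''^e) = V(H + H'^e) \ V(R''^e). -/
theorem stmt_0 {K : Type*} [Field K] [IsAlgClosed K] {n : ℕ}
    (U U' : Set (Fin n)) (hUU' : U' ⊆ U)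
    (H T : Ideal (MvPolynomial (Fin n) K))
    (R' : Ideal (MvPolynomial U K)) (R'' : Ideal (MvPolynomial U' K))
    (H' : Ideal (MvPolynomial U K))
    (hH' : H' = (H + T).comap
      (MvPolynomial.rename (Subtype.val : U → Fin n) : MvPolynomial U K →ₐ[K] _).toRingHom)
    (h1 : zeroSet (H + R'.map (MvPolynomial.rename (Subtype.val : U → Fin n)).toRingHom) \
            zeroSet (R''.map (MvPolynomial.rename (Subtype.val : U' → Fin n)).toRingHom) ⊆
          zeroSet T)
    (h2 : zeroSet (H + T) ⊆
          zeroSet (R'.map (MvPolynomial.rename (Subtype.val : U → Fin n)).toRingHom))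
    (h3 : (zeroSet (H + R'.map (MvPolynomial.rename (Subtype.val : U → Fin n)).toRingHom) \
            zeroSet (R''.map (MvPolynomial.rename (Subtype.val : U' → Fin n)).toRingHom)).Nonempty) :
    zeroSet (H + R'.map (MvPolynomial.rename (Subtype.val : U → Fin n)).toRingHom) \
        zeroSet (R''.map (MvPolynomial.rename (Subtype.val : U' → Fin n)).toRingHom) =
      zeroSet (H + H'.map (MvPolynomial.rename (Subtype.val : U → Fin n)).toRingHom) \
        zeroSet (R''.map (MvPolynomial.rename (Subtype.val : U' → Fin n)).toRingHom) := by
  set φ := (MvPolynomial.rename (Subtype.val : U → Fin n) : MvPolynomial U K →ₐ[K] _).toRingHom with hφ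
  -- key: V(H'^e) ⊆ V(R'^e)
  have key : zeroSet (H'.map φ) ⊆ zeroSet (R'.map φ) := by
    intro p hp
    intro f hf
    -- reduce to generators
    have hle : R'.map φ ≤ RingHom.ker (MvPolynomial.eval p) := by
      rw [Ideal.map_le_iff_le_comap]
      intro g hg
      have hvan : φ g ∈ MvPolynomial.vanishingIdeal K (MvPolynomial.zeroLocus K (H + T)) := by
        intro x hx
        exact h2 (fun q hq => hx q hq) (φ g) (Ideal.mem_map_of_mem φ hg)
      rw [MvPolynomial.vanishingIdeal_zeroLocus_eq_radical] at hvan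
      obtain ⟨k, hk⟩ := hvan
      have hgk : g ^ k ∈ H' := by
        rw [hH']
        show φ (g ^ k) ∈ H + T
        rw [map_pow]; exact hk
      have h0 : MvPolynomial.eval p (φ (g ^ k)) = 0 :=
        hp _ (Ideal.mem_map_of_mem φ hgk)
      rw [map_pow, map_pow] at h0
      rcases Nat.eq_zero_or_pos k with hk0 | hk0
      · exfalso; rw [hk0, pow_zero] at h0; exact one_ne_zero h0
      · have := pow_eq_zero_iff hk0.ne' |>.mp h0
        simpa [Ideal.mem_comap, RingHom.mem_ker] using this
    exact hle hf
  have hmap_le : H'.map φ ≤ H + T := by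
    rw [hH']; exact Ideal.map_comap_le
  ext p
  simp only [Set.mem_diff]
  constructor
  · rintro ⟨hp1, hp2⟩
    refine ⟨?_, hp2⟩
    rw [zeroSet_add_eq] at hp1 ⊢
    have hpT : p ∈ zeroSet T := h1 ⟨by rw [zeroSet_add_eq]; exact hp1, hp2⟩
    refine ⟨hp1.1, ?_⟩
    exact zeroSet_anti hmap_le (by rw [zeroSet_add_eq]; exact ⟨hp1.1, hpT⟩)
  · rintro ⟨hp1, hp2⟩
    refine ⟨?_, hp2⟩
    rw [zeroSet_add_eq] at hp1 ⊢
    exact ⟨hp1.1, key hp1.2⟩
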